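/- Let A be a unital C*-algebra and H a selfadjoint element of A whose real spectrum is contained in {x : |x| ≥ δ} for some δ > 0. Then the map λ ↦ H(H² + λ²·1)⁻¹ is Bochner integrable on (0,∞) and (2/π) ∫₀^∞ H (H² + λ²·1)⁻¹ dλ = sgn(H), where sgn(H) denotes the continuous functional calculus of H applied to x ↦ x/|x|. -/

import Mathlib

open MeasureTheory Set

lemma aux_scalar_integral {x : ℝ} (hx : x ≠ 0) :
    ∫ l in Ioi (0:ℝ), x / (x ^ 2 + l ^ 2) = Real.pi / 2 * (x / |x|) := by
  have hax : 0 < |x| := abs_pos.2 hx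
  have h := integral_comp_mul_left_Ioi (fun l => x / (x ^ 2 + l ^ 2)) 0 hax
  have key : ∀ t : ℝ, x / (x ^ 2 + (|x| * t) ^ 2) = x⁻¹ * (1 + t ^ 2)⁻¹ := by
    intro t
    rw [mul_pow, sq_abs]
    rw [show x ^ 2 + x ^ 2 * t ^ 2 = x ^ 2 * (1 + t ^ 2) by ring]
    have h1 : (1 : ℝ) + t ^ 2 ≠ 0 := by positivity
    field_simp
  simp only [key, mul_zero] at h
  rw [MeasureTheory.integral_const_mul, integral_Ioi_inv_one_add_sq, Real.arctan_zero, sub_zero]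
    at h
  have h2 : (∫ l in Ioi (0:ℝ), x / (x ^ 2 + l ^ 2)) = |x| * (x⁻¹ * (Real.pi / 2)) := by
    rw [h, smul_eq_mul]
    field_simp
  rw [h2]
  rcases hx.lt_or_gt with hneg | hpos
  · rw [abs_of_neg hneg]; field_simp
  · rw [abs_of_pos hpos]; field_simp

theorem sign_eq_two_div_pi_integral_resolvent {A : Type*} [CStarAlgebra A]
    (δ : ℝ) (hδ : 0 < δ) (H : A) (hH : IsSelfAdjoint H)
    (hspec : spectrum ℝ H ⊆ {x : ℝ | δ ≤ |x|}) :
    IntegrableOn (fun l : ℝ => H * Ring.inverse (H ^ 2 + l ^ 2 • (1 : A))) (Ioi 0) volume ∧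
    (2 / Real.pi) • ∫ l in Ioi (0 : ℝ), H * Ring.inverse (H ^ 2 + l ^ 2 • (1 : A)) =
      cfc (fun x : ℝ => x / |x|) H := by
  rcases subsingleton_or_nontrivial A with hA | hA
  · constructor
    · have : (fun l : ℝ => H * Ring.inverse (H ^ 2 + l ^ 2 • (1 : A))) = fun _ => 0 :=
        funext fun l => Subsingleton.elim _ _
      rw [this]
      exact integrableOn_zero
    · exact Subsingleton.elim _ _
  -- basic facts about the spectrum
  have hx0 : ∀ x : ℝ, x ∈ spectrum ℝ H → x ≠ 0 := by
    intro x hx h0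
    have := hspec hx
    rw [h0] at this
    simp only [mem_setOf_eq, abs_zero] at this
    linarith
  have hxδ : ∀ x : ℝ, x ∈ spectrum ℝ H → δ ≤ |x| := fun x hx => hspec hx
  have hxH : ∀ x : ℝ, x ∈ spectrum ℝ H → |x| ≤ ‖H‖ := by
    intro x hx
    simpa using spectrum.norm_le_norm_of_mem hx
  -- the jointly continuous kernel
  have hGcont : Continuous fun p : ℝ × spectrum ℝ H => ((p.2 : ℝ) / ((p.2 : ℝ) ^ 2 + p.1 ^ 2)) := by
    apply Continuous.div
    · fun_prop
    · fun_prop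
    · intro p
      have h1 : (p.2 : ℝ) ≠ 0 := hx0 _ p.2.2
      positivity
  set G : C(ℝ × spectrum ℝ H, ℝ) := ⟨_, hGcont⟩ with hG
  set F : ℝ → C(spectrum ℝ H, ℝ) := fun l => G.curry l with hF
  have hFcont : Continuous F := G.curry.continuous
  have hFapply : ∀ (l : ℝ) (x : spectrum ℝ H), F l x = (x : ℝ) / ((x : ℝ) ^ 2 + l ^ 2) :=
    fun l x => rfl
  -- norm bound for large l
  have hFb2 : ∀ l : ℝ, 0 < l → ‖F l‖ ≤ ‖H‖ / l ^ 2 := by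
    intro l hl
    rw [ContinuousMap.norm_le _ (by positivity)]
    intro x
    rw [hFapply, Real.norm_eq_abs, abs_div]
    have h1 : (x : ℝ) ≠ 0 := hx0 _ x.2
    have hd : (0:ℝ) < (x : ℝ) ^ 2 + l ^ 2 := by positivity
    rw [abs_of_pos hd]
    refine div_le_div₀ ((abs_nonneg _).trans (hxH _ x.2)) (hxH _ x.2) (by positivity) ?_
    linarith [sq_nonneg (x : ℝ)]
  -- integrability of F on (0, ∞)
  have hFint : IntegrableOn F (Ioi 0) volume := by
    have hsplit : Ioi (0:ℝ) = Ioc (0:ℝ) 1 ∪ Ioi 1 := (Ioc_union_Ioi_eq_Ioi zero_le_one).symm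
    rw [hsplit]
    apply IntegrableOn.union
    · exact (hFcont.integrableOn_Icc (a := 0) (b := 1)).mono_set Ioc_subset_Icc_self
    · have hmaj : IntegrableOn (fun l : ℝ => ‖H‖ * l ^ (-2 : ℝ)) (Ioi 1) volume :=
        (integrableOn_Ioi_rpow_of_lt (by norm_num) one_pos).const_mul ‖H‖
      apply Integrable.mono' hmaj (hFcont.aestronglyMeasurable.restrict)
      rw [ae_restrict_iff' measurableSet_Ioi]
      refine Filter.Eventually.of_forall fun l hl => ?_
      have hl1 : (1:ℝ) < l := hl
      have hl0 : (0:ℝ) < l := lt_trans one_pos hl1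
      have hrw : l ^ (-2 : ℝ) = (l ^ 2)⁻¹ := by
        rw [show (-2:ℝ) = -(2:ℝ) by norm_num, Real.rpow_neg hl0.le, Real.rpow_two]
      rw [hrw, ← div_eq_mul_inv]
      exact hFb2 l hl0
  -- the algebraic identity for each l > 0
  have halg : ∀ l : ℝ, 0 < l →
      H * Ring.inverse (H ^ 2 + l ^ 2 • (1 : A)) = cfc (fun x : ℝ => x / (x ^ 2 + l ^ 2)) H := by
    intro l hl
    have hd : ∀ x : ℝ, x ^ 2 + l ^ 2 ≠ 0 := fun x => by positivity
    have hcont1 : Continuous fun x : ℝ => x ^ 2 + l ^ 2 := by fun_prop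
    have hcont2 : Continuous fun x : ℝ => (x ^ 2 + l ^ 2)⁻¹ := hcont1.inv₀ hd
    have hu : H ^ 2 + l ^ 2 • (1 : A) = cfc (fun x : ℝ => x ^ 2 + l ^ 2) H := by
      rw [cfc_add (a := H) (fun x : ℝ => x ^ 2) (fun _ : ℝ => l ^ 2)
        (by fun_prop) (by fun_prop), cfc_pow_id (R := ℝ) H 2, cfc_const (l ^ 2) H,
        Algebra.algebraMap_eq_smul_one]
    set v : A := cfc (fun x : ℝ => (x ^ 2 + l ^ 2)⁻¹) H with hv
    have huv : cfc (fun x : ℝ => x ^ 2 + l ^ 2) H * v = 1 := by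
      rw [hv, ← cfc_mul _ _ H hcont1.continuousOn hcont2.continuousOn]
      have : (fun x : ℝ => (x ^ 2 + l ^ 2) * (x ^ 2 + l ^ 2)⁻¹) = fun _ : ℝ => (1:ℝ) :=
        funext fun x => mul_inv_cancel₀ (hd x)
      rw [this, cfc_const_one (R := ℝ) (a := H)]
    have hvu : v * cfc (fun x : ℝ => x ^ 2 + l ^ 2) H = 1 := by
      rw [hv, ← cfc_mul _ _ H hcont2.continuousOn hcont1.continuousOn]
      have : (fun x : ℝ => (x ^ 2 + l ^ 2)⁻¹ * (x ^ 2 + l ^ 2)) = fun _ : ℝ => (1:ℝ) :=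
        funext fun x => inv_mul_cancel₀ (hd x)
      rw [this, cfc_const_one (R := ℝ) (a := H)]
    have hinv : Ring.inverse (H ^ 2 + l ^ 2 • (1 : A)) = v := by
      rw [hu]
      have hU : Ring.inverse ((⟨_, v, huv, hvu⟩ : Aˣ) : A) = v := Ring.inverse_unit _
      exact hU
    rw [hinv]
    conv_lhs => rw [← cfc_id (R := ℝ) H]
    rw [hv, ← cfc_mul _ _ H continuousOn_id hcont2.continuousOn]
    exact cfc_congr fun x _ => (div_eq_mul_inv _ _).symm
  -- the cfc as a continuous linear map
  let φ := cfcHom (R := ℝ) hH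
  have hφcont : Continuous φ := (cfcHom_isClosedEmbedding (R := ℝ) hH).continuous
  let Φ : C(spectrum ℝ H, ℝ) →L[ℝ] A := { toLinearMap := φ.toAlgHom.toLinearMap, cont := hφcont }
  have hΦapply : ∀ f : C(spectrum ℝ H, ℝ), Φ f = φ f := fun f => rfl
  have hΦF : ∀ l : ℝ, Φ (F l) = cfc (fun x : ℝ => x / (x ^ 2 + l ^ 2)) H := by
    intro l
    have hcont : ContinuousOn (fun x : ℝ => x / (x ^ 2 + l ^ 2)) (spectrum ℝ H) := by
      apply ContinuousOn.div continuousOn_id (by fun_prop)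
      intro x hx
      have h1 : x ≠ 0 := hx0 _ hx
      positivity
    rw [cfc_apply (fun x : ℝ => x / (x ^ 2 + l ^ 2)) H hH hcont, hΦapply]
    exact congrArg φ (ContinuousMap.ext fun x => rfl)
  -- integrability of the A-valued integrand
  have hIntA : IntegrableOn (fun l => Φ (F l)) (Ioi 0) volume :=
    Φ.integrable_comp hFint
  have hEq : EqOn (fun l => Φ (F l))
      (fun l : ℝ => H * Ring.inverse (H ^ 2 + l ^ 2 • (1 : A))) (Ioi 0) :=
    fun l hl => (hΦF l).trans (halg l hl).symm
  refine ⟨hIntA.congr_fun hEq measurableSet_Ioi, ?_⟩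
  -- the sign function as a continuous map on the spectrum
  have hScont : Continuous fun x : spectrum ℝ H => (x : ℝ) / |(x : ℝ)| := by
    apply Continuous.div (by fun_prop) (by fun_prop)
    intro x
    exact abs_ne_zero.2 (hx0 _ x.2)
  set S : C(spectrum ℝ H, ℝ) := ⟨_, hScont⟩ with hS
  -- compute the integral of F
  have hIF : (∫ l in Ioi (0:ℝ), F l) = (Real.pi / 2) • S := by
    refine ContinuousMap.ext fun x => ?_
    have hev := (ContinuousMap.evalCLM ℝ x).integral_comp_comm hFint
    have hev' : (∫ l in Ioi (0:ℝ), F l) x = ∫ l in Ioi (0:ℝ), F l x := by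
      exact hev.symm
    rw [hev']
    simp only [hFapply]
    rw [aux_scalar_integral (hx0 _ x.2)]
    simp [hS]
  -- put it together
  have hint_eq : (∫ l in Ioi (0:ℝ), H * Ring.inverse (H ^ 2 + l ^ 2 • (1 : A)))
      = Φ (∫ l in Ioi (0:ℝ), F l) := by
    rw [← setIntegral_congr_fun measurableSet_Ioi hEq]
    exact Φ.integral_comp_comm hFint
  rw [hint_eq, hIF, Φ.map_smul, smul_smul]
  have hπ : (2 / Real.pi) * (Real.pi / 2) = 1 := by
    field_simp
  rw [hπ, one_smul, hΦapply]
  have hcontS : ContinuousOn (fun x : ℝ => x / |x|) (spectrum ℝ H) := by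
    apply ContinuousOn.div continuousOn_id (by fun_prop)
    intro x hx
    exact abs_ne_zero.2 (hx0 _ hx)
  rw [cfc_apply (fun x : ℝ => x / |x|) H hH hcontS]
  exact (congrArg φ (ContinuousMap.ext fun x => rfl)).symm
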